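/- For Re u ≤ 0, the derivative with respect to u of e^{ξuе^{-as}/(1-(σ²/(2a))(1-e^{-as})u)} is bounded in absolute value by ξ e^{-as}; consequently, if ∫_{(0,∞)} ξ ν(dξ) < ∞, the function Δ(u) = ∫₀^t ∫_{(0,∞)} (e^{ξue^{-as}/(1-(σ²/(2a))(1-e^{-as})u)} - 1) ν(dξ) ds is differentiable at u = 0 (from the left along the reals) with Δ'(0) = ((1-e^{-at})/a) ∫_{(0,∞)} ξ ν(dξ). -/

import Mathlib

open MeasureTheory Filter Set

private lemma aux_hasDerivAt (ξ E C u : ℝ) (hC : 0 ≤ C) (hu : u ≤ 0) :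
    HasDerivAt (fun v : ℝ => Real.exp (ξ * v * E / (1 - C * v)))
      (Real.exp (ξ * u * E / (1 - C * u)) * (ξ * E / (1 - C * u) ^ 2)) u := by
  have hden : (1:ℝ) ≤ 1 - C * u := by nlinarith
  have hne : 1 - C * u ≠ 0 := by linarith
  have h1 : HasDerivAt (fun v : ℝ => ξ * v * E) (ξ * E) u := by
    simpa using ((hasDerivAt_id u).const_mul ξ).mul_const E
  have h2 : HasDerivAt (fun v : ℝ => 1 - C * v) (-C) u := by
    simpa using ((hasDerivAt_id u).const_mul C).const_sub 1
  have h3 := (h1.div h2 hne).exp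
  have hnum : ξ * E * (1 - C * u) - ξ * u * E * -C = ξ * E := by ring
  rw [hnum] at h3
  exact h3

private lemma aux_bound (ξ E C u : ℝ) (hξ : 0 ≤ ξ) (hE : 0 ≤ E) (hC : 0 ≤ C) (hu : u ≤ 0) :
    |Real.exp (ξ * u * E / (1 - C * u)) * (ξ * E / (1 - C * u) ^ 2)| ≤ ξ * E := by
  have hden : (1:ℝ) ≤ 1 - C * u := by nlinarith
  have hx : ξ * u * E / (1 - C * u) ≤ 0 :=
    div_nonpos_iff.mpr (Or.inr ⟨by nlinarith [mul_nonneg hξ hE], by linarith⟩)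
  have h1 : Real.exp (ξ * u * E / (1 - C * u)) ≤ 1 := Real.exp_le_one_iff.mpr hx
  have hq : ξ * E / (1 - C * u) ^ 2 ≤ ξ * E := div_le_self (by positivity) (by nlinarith)
  have hq0 : 0 ≤ ξ * E / (1 - C * u) ^ 2 := by positivity
  rw [abs_of_nonneg (mul_nonneg (Real.exp_pos _).le hq0)]
  nlinarith [Real.exp_pos (ξ * u * E / (1 - C * u))]

private lemma slope_bound (ξ E C u : ℝ) (hξ : 0 ≤ ξ) (hE0 : 0 ≤ E) (hE1 : E ≤ 1)
    (hC : 0 ≤ C) (hu : u < 0) :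
    ‖(Real.exp (ξ * u * E / (1 - C * u)) - 1) / u‖ ≤ ξ := by
  have hden : (1:ℝ) ≤ 1 - C * u := by nlinarith
  set x := ξ * u * E / (1 - C * u) with hxdef
  have hx : x ≤ 0 := div_nonpos_iff.mpr
    (Or.inr ⟨by nlinarith [mul_nonneg hξ hE0], by linarith⟩)
  have hxge : ξ * u * E ≤ x := (le_div_iff₀ (by linarith)).mpr
    (by nlinarith [mul_nonneg (mul_nonneg (mul_nonneg hξ hE0) hC) (mul_self_nonneg u)])
  have hxge2 : ξ * u ≤ x := by
    nlinarith [mul_nonneg (mul_nonneg hξ (neg_nonneg.mpr hu.le)) (sub_nonneg.mpr hE1)]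
  have hexp : x + 1 ≤ Real.exp x := Real.add_one_le_exp x
  have h1 : Real.exp x ≤ 1 := Real.exp_le_one_iff.mpr hx
  rw [Real.norm_eq_abs, abs_div, abs_of_nonpos (by linarith), abs_of_neg hu,
    div_le_iff₀ (by linarith)]
  nlinarith

theorem Delta_left_derivative (a σ t : ℝ) (ha : 0 < a) (hσ : 0 < σ) (ht : 0 < t)
    (ν : Measure ℝ)
    (hν : ∫⁻ ξ in Set.Ioi (0 : ℝ), ENNReal.ofReal ξ ∂ν < ⊤)
    (Δ : ℝ → ℝ)
    (hΔ : ∀ u : ℝ, u ≤ 0 →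
      Δ u = ∫ s in Set.Ioo (0 : ℝ) t, ∫ ξ in Set.Ioi (0 : ℝ),
        (Real.exp (ξ * u * Real.exp (-a * s) /
          (1 - σ ^ 2 / (2 * a) * (1 - Real.exp (-a * s)) * u)) - 1) ∂ν) :
    (∀ u : ℝ, u ≤ 0 → ∀ s : ℝ, s ∈ Set.Icc 0 t → ∀ ξ : ℝ, 0 < ξ →
      ∃ d : ℝ,
        HasDerivAt (fun v : ℝ => Real.exp (ξ * v * Real.exp (-a * s) /
            (1 - σ ^ 2 / (2 * a) * (1 - Real.exp (-a * s)) * v))) d u ∧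
        |d| ≤ ξ * Real.exp (-a * s)) ∧
    HasDerivWithinAt Δ
      ((1 - Real.exp (-a * t)) / a * (∫ ξ in Set.Ioi (0 : ℝ), ξ ∂ν))
      (Set.Iic (0 : ℝ)) 0 := by
  have hCnn : ∀ s : ℝ, 0 ≤ s → 0 ≤ σ ^ 2 / (2 * a) * (1 - Real.exp (-a * s)) := by
    intro s hs
    have h1 : Real.exp (-a * s) ≤ 1 := Real.exp_le_one_iff.mpr (by nlinarith)
    have h2 : (0:ℝ) ≤ σ ^ 2 / (2 * a) := by positivity
    nlinarith
  constructor
  · intro u hu s hs ξ hξ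
    exact ⟨_, aux_hasDerivAt ξ (Real.exp (-a * s)) _ u (hCnn s hs.1) hu,
      aux_bound ξ (Real.exp (-a * s)) _ u hξ.le (Real.exp_pos _).le (hCnn s hs.1) hu⟩
  -- Part 2
  set ν' : Measure ℝ := ν.restrict (Set.Ioi 0) with hν'def
  set μ1 : Measure ℝ := volume.restrict (Set.Ioo (0:ℝ) t) with hμ1def
  haveI : IsFiniteMeasure μ1 := by
    constructor
    rw [hμ1def, Measure.restrict_apply_univ, Real.volume_Ioo]
    exact ENNReal.ofReal_lt_top
  -- sigma-finiteness of ν'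
  have hIoi_fin : ∀ b : ℝ, 0 < b → ν (Set.Ioi b) < ⊤ := by
    intro b hb
    have h1 : ENNReal.ofReal b * ν (Set.Ioi b) ≤ ∫⁻ ξ in Set.Ioi (0:ℝ), ENNReal.ofReal ξ ∂ν := by
      calc ENNReal.ofReal b * ν (Set.Ioi b)
          = ∫⁻ _ in Set.Ioi b, ENNReal.ofReal b ∂ν := by
            rw [setLIntegral_const, mul_comm]
        _ ≤ ∫⁻ ξ in Set.Ioi b, ENNReal.ofReal ξ ∂ν := by
            refine setLIntegral_mono (by fun_prop) (fun x hx => ?_)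
            exact ENNReal.ofReal_le_ofReal (le_of_lt hx)
        _ ≤ ∫⁻ ξ in Set.Ioi (0:ℝ), ENNReal.ofReal ξ ∂ν :=
            lintegral_mono_set (Set.Ioi_subset_Ioi hb.le)
    have h2 : ENNReal.ofReal b * ν (Set.Ioi b) < ⊤ := lt_of_le_of_lt h1 hν
    rcases ENNReal.mul_lt_top_iff.mp h2 with ⟨_, h⟩ | h | h
    · exact h
    · exact absurd h (by simp [ENNReal.ofReal_eq_zero, not_le, hb])
    · simp [h]
  haveI hσfin : SigmaFinite ν' := by
    refine ⟨⟨⟨fun n => Set.Ioi (1/(n+1) : ℝ) ∪ Set.Iic 0, fun _ => trivial, ?_, ?_⟩⟩⟩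
    · intro n
      have hb : (0:ℝ) < 1/(n+1) := by positivity
      rw [hν'def, Measure.restrict_apply ((measurableSet_Ioi.union measurableSet_Iic))]
      have : (Set.Ioi (1/(n+1) : ℝ) ∪ Set.Iic 0) ∩ Set.Ioi 0 = Set.Ioi (1/(n+1) : ℝ) := by
        ext x
        simp only [Set.mem_inter_iff, Set.mem_union, Set.mem_Ioi, Set.mem_Iic]
        constructor
        · rintro ⟨h1 | h1, h2⟩
          · exact h1
          · linarith
        · intro h; exact ⟨Or.inl h, lt_trans hb h⟩
      rw [this]
      exact hIoi_fin _ hb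
    · apply Set.eq_univ_of_forall
      intro x
      rcases le_or_gt x 0 with h | h
      · exact Set.mem_iUnion.mpr ⟨0, Or.inr h⟩
      · obtain ⟨n, hn⟩ := exists_nat_one_div_lt h
        exact Set.mem_iUnion.mpr ⟨n, Or.inl (by exact_mod_cast hn)⟩
  -- integrability of ξ
  have hint : Integrable (fun ξ : ℝ => ξ) ν' := by
    refine ⟨measurable_id.aestronglyMeasurable, ?_⟩
    rw [hasFiniteIntegral_iff_norm]
    have : ∫⁻ ξ, ENNReal.ofReal ‖ξ‖ ∂ν' = ∫⁻ ξ in Set.Ioi (0:ℝ), ENNReal.ofReal ξ ∂ν := by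
      rw [hν'def]
      refine setLIntegral_congr_fun measurableSet_Ioi (fun ξ hξ => ?_)
      rw [Real.norm_eq_abs, abs_of_pos hξ]
    rw [this]
    exact hν
  set μp : Measure (ℝ × ℝ) := μ1.prod ν' with hμpdef
  have haemem : ∀ᵐ p ∂μp, p ∈ Set.Ioo (0:ℝ) t ×ˢ Set.Ioi (0:ℝ) := by
    have h1 : μp ((Set.Ioo (0:ℝ) t)ᶜ ×ˢ (Set.univ : Set ℝ)) = 0 := by
      rw [hμpdef, Measure.prod_prod, hμ1def,
        Measure.restrict_apply measurableSet_Ioo.compl]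
      simp
    have h2 : μp ((Set.univ : Set ℝ) ×ˢ (Set.Ioi (0:ℝ))ᶜ) = 0 := by
      rw [hμpdef, Measure.prod_prod, hν'def,
        Measure.restrict_apply measurableSet_Ioi.compl, Set.compl_inter_self]
      simp
    have h3 : μp ((Set.Ioo (0:ℝ) t ×ˢ Set.Ioi (0:ℝ))ᶜ) = 0 := by
      refine measure_mono_null ?_ (measure_union_null h1 h2)
      intro p hp
      simp only [Set.mem_compl_iff, Set.mem_prod, not_and_or] at hp
      rcases hp with hp | hp
      · exact Or.inl ⟨hp, Set.mem_univ _⟩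
      · exact Or.inr ⟨Set.mem_univ _, hp⟩
    rw [ae_iff]
    exact h3
  have hsnd : Integrable (fun p : ℝ × ℝ => p.2) μp := by
    simpa using (integrable_const (1:ℝ) : Integrable _ μ1).mul_prod hint
  set F : ℝ → ℝ × ℝ → ℝ := fun u p =>
    (Real.exp (p.2 * u * Real.exp (-a * p.1) /
      (1 - σ ^ 2 / (2 * a) * (1 - Real.exp (-a * p.1)) * u)) - 1) / u with hFdef
  have hmeas : ∀ u : ℝ, Measurable (fun p : ℝ × ℝ =>
      Real.exp (p.2 * u * Real.exp (-a * p.1) /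
        (1 - σ ^ 2 / (2 * a) * (1 - Real.exp (-a * p.1)) * u)) - 1) := by
    intro u; fun_prop
  have hEbound : ∀ s : ℝ, 0 ≤ s → Real.exp (-a * s) ≤ 1 := fun s hs =>
    Real.exp_le_one_iff.mpr (by nlinarith)
  -- the key tendsto via dominated convergence
  have hDC : Tendsto (fun u => ∫ p, F u p ∂μp) (nhdsWithin 0 (Set.Iio 0))
      (nhds (∫ p, Real.exp (-a * p.1) * p.2 ∂μp)) := by
    refine tendsto_integral_filter_of_dominated_convergence (fun p => p.2) ?_ ?_ ?_ ?_
    · filter_upwards with u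
      exact ((hmeas u).div_const u).aestronglyMeasurable
    · filter_upwards [self_mem_nhdsWithin] with u hu
      filter_upwards [haemem] with p hp
      obtain ⟨hs, hξ⟩ := hp
      exact slope_bound p.2 (Real.exp (-a * p.1)) _ u (le_of_lt hξ) (Real.exp_pos _).le
        (hEbound p.1 hs.1.le) (hCnn p.1 hs.1.le) hu
    · exact hsnd
    · filter_upwards [haemem] with p hp
      obtain ⟨hs, hξ⟩ := hp
      have hd := aux_hasDerivAt p.2 (Real.exp (-a * p.1))
        (σ ^ 2 / (2 * a) * (1 - Real.exp (-a * p.1))) 0 (hCnn p.1 hs.1.le) le_rfl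
      have hd0 : HasDerivAt (fun v : ℝ => Real.exp (p.2 * v * Real.exp (-a * p.1) /
          (1 - σ ^ 2 / (2 * a) * (1 - Real.exp (-a * p.1)) * v)))
          (Real.exp (-a * p.1) * p.2) 0 := by
        convert hd using 1
        simp [mul_comm]
      have htend := hasDerivAt_iff_tendsto_slope.mp hd0
      have hmono : nhdsWithin (0:ℝ) (Set.Iio 0) ≤ nhdsWithin (0:ℝ) {(0:ℝ)}ᶜ :=
        nhdsWithin_mono 0 (fun x hx => ne_of_lt hx)
      have := htend.mono_left hmono
      refine this.congr (fun u => ?_)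
      rw [slope_def_field]
      simp [hFdef]
  -- identify the limit
  have hlimval : ∫ p, Real.exp (-a * p.1) * p.2 ∂μp
      = (1 - Real.exp (-a * t)) / a * ∫ ξ in Set.Ioi (0:ℝ), ξ ∂ν := by
    rw [hμpdef, integral_prod_mul (f := fun s : ℝ => Real.exp (-a * s)) (g := fun ξ : ℝ => ξ)]
    have hsint : ∫ s in Set.Ioo (0:ℝ) t, Real.exp (-a * s) = (1 - Real.exp (-a * t)) / a := by
      rw [← integral_Ioc_eq_integral_Ioo, ← intervalIntegral.integral_of_le ht.le]
      have := intervalIntegral.integral_comp_mul_left (a := (0:ℝ)) (b := t)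
        (fun x => Real.exp x) (neg_ne_zero.mpr ha.ne')
      simp only [mul_zero, neg_mul] at this ⊢
      rw [this, integral_exp]
      simp only [smul_eq_mul, Real.exp_zero]
      rw [eq_div_iff ha.ne']
      field_simp
      linear_combination (0:ℝ) * mul_inv_cancel₀ ha.ne'
    rw [hμ1def, hν'def, hsint]
  -- identify the integral with Δ u / u for u < 0
  have heq : ∀ u : ℝ, u < 0 → ∫ p, F u p ∂μp = Δ u / u := by
    intro u hu
    have hInt : Integrable (fun p : ℝ × ℝ =>
        Real.exp (p.2 * u * Real.exp (-a * p.1) /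
          (1 - σ ^ 2 / (2 * a) * (1 - Real.exp (-a * p.1)) * u)) - 1) μp := by
      refine Integrable.mono' (hsnd.mul_const |u|) (hmeas u).aestronglyMeasurable ?_
      filter_upwards [haemem] with p hp
      obtain ⟨hs, hξ⟩ := hp
      have hb := slope_bound p.2 (Real.exp (-a * p.1)) _ u (le_of_lt hξ) (Real.exp_pos _).le
        (hEbound p.1 hs.1.le) (hCnn p.1 hs.1.le) hu
      rw [norm_div, Real.norm_eq_abs u, div_le_iff₀ (abs_pos.mpr hu.ne)] at hb
      simpa using hb
    have hfub := integral_prod _ hInt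
    rw [hFdef]
    simp only [integral_div]
    rw [hfub, hΔ u hu.le]
  -- conclude
  have hΔ0 : Δ 0 = 0 := by
    rw [hΔ 0 le_rfl]; simp
  rw [hasDerivWithinAt_iff_tendsto_slope]
  have hset : Set.Iic (0:ℝ) \ {0} = Set.Iio 0 := by
    ext x
    simp only [Set.mem_diff, Set.mem_Iic, Set.mem_singleton_iff, Set.mem_Iio]
    constructor
    · rintro ⟨h1, h2⟩; exact lt_of_le_of_ne h1 h2
    · intro h; exact ⟨h.le, h.ne⟩
  rw [hset]
  rw [← hlimval]
  refine hDC.congr' ?_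
  filter_upwards [self_mem_nhdsWithin] with u hu
  rw [heq u hu, slope_def_field, hΔ0]
  simp
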